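/- arXiv:math/0610387 — 3 statements merged into one kernel-verified Lean document; each statement's English description precedes it below -/
import Mathlib

section
/- Let Γ be a crystallographic group of rank n with translation subgroup A, let C be a maximal cyclic subgroup of A generated by translation by v, and let N_Γ(C) be its normalizer in Γ. The induced action of N_Γ(C)/C on the quotient ℝ^{n-1}(C) ≅ ℝⁿ/ℝv gives a homomorphism j_C : N_Γ(C)/C → Iso(ℝ^{n-1}(C)) whose kernel has at most two elements. -/
noncomputable section

/-- Euclidean `n`-space `ℝⁿ`. -/
abbrev Eucl (n : ℕ) := EuclideanSpace ℝ (Fin n)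

/-- The isometry group of `ℝⁿ`. -/
abbrev IsoRn (n : ℕ) := Eucl n ≃ᵢ Eucl n

/-- `g` is the translation by the vector `v`. -/
def IsTranslationBy {n : ℕ} (g : IsoRn n) (v : Eucl n) : Prop := ∀ x, g x = x + v

/-- The subgroup `Trans(ℝⁿ)` of translations of `ℝⁿ`. -/
def Translations (n : ℕ) : Subgroup (IsoRn n) where
  carrier := {g | ∃ v, IsTranslationBy g v}
  one_mem' := ⟨0, fun x => by simp [IsTranslationBy]⟩
  mul_mem' := by
    rintro g h ⟨v, hv⟩ ⟨w, hw⟩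
    refine ⟨w + v, fun x => ?_⟩
    show g (h x) = x + (w + v)
    rw [hw x, hv (x + w), add_assoc]
  inv_mem' := by
    rintro g ⟨v, hv⟩
    refine ⟨-v, fun x => ?_⟩
    apply g.injective
    rw [IsometryEquiv.apply_inv_self, hv]
    abel
  
/-- A crystallographic group of rank `n` is a discrete (equivalently, acting properly
discontinuously) cocompact subgroup of the isometry group of `ℝⁿ`. -/
def IsCrystallographic {n : ℕ} (Γ : Subgroup (IsoRn n)) : Prop :=
  (∀ K L : Set (Eucl n), IsCompact K → IsCompact L →
      {γ : Γ | ((γ : IsoRn n) '' K ∩ L).Nonempty}.Finite) ∧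
  ∃ K : Set (Eucl n), IsCompact K ∧ (⋃ γ : Γ, (γ : IsoRn n) '' K) = Set.univ

/-- A group is virtually cyclic if it has a cyclic subgroup of finite index. -/
def VirtuallyCyclic (G : Type*) [Group G] : Prop :=
  ∃ K : Subgroup G, IsCyclic K ∧ K.FiniteIndex

/-- `C` is a maximal cyclic subgroup of `A`: a cyclic subgroup of `A` not properly contained
in any cyclic subgroup of `A`. -/
def IsMaxCyclic {n : ℕ} (A C : Subgroup (IsoRn n)) : Prop :=
  C ≤ A ∧ (∃ c, C = Subgroup.zpowers c) ∧
    ∀ D : Subgroup (IsoRn n), D ≤ A → (∃ d, D = Subgroup.zpowers d) → C ≤ D → C = D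
/-- The line through `x` in the direction of `v` (the `C`-invariant line containing `x`,
when `C` is generated by the translation by `v`). -/
def lineThrough {n : ℕ} (v x : Eucl n) : Set (Eucl n) := {p | ∃ t : ℝ, p = x + t • v}

/-- Translation by `w` as an isometry equivalence. -/
def Tr (n : ℕ) (w : Eucl n) : IsoRn n where
  toFun := fun x => x + w
  invFun := fun x => x - w
  left_inv := fun x => by simp
  right_inv := fun x => by simp
  isometry_toFun := Isometry.of_dist_eq fun a b => by
    simp [dist_eq_norm]

@[simp] lemma Tr_apply (n : ℕ) (w x : Eucl n) : Tr n w x = x + w := rfl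

lemma Tr_mul (n : ℕ) (w w' : Eucl n) : Tr n w * Tr n w' = Tr n (w + w') := by
  apply IsometryEquiv.ext
  intro x
  simp [IsometryEquiv.mul_apply, add_assoc, add_comm w' w]

@[simp] lemma Tr_zero (n : ℕ) : Tr n (0 : Eucl n) = 1 := by
  apply IsometryEquiv.ext; intro x; simp

lemma Tr_inv (n : ℕ) (w : Eucl n) : (Tr n w)⁻¹ = Tr n (-w) := by
  rw [eq_comm, eq_inv_iff_mul_eq_one, Tr_mul]
  simp

lemma Tr_zpow (n : ℕ) (w : Eucl n) (k : ℤ) : Tr n w ^ k = Tr n (k • w) := by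
  induction k using Int.induction_on with
  | zero => simp
  | succ i ih => rw [zpow_add_one, ih, Tr_mul]; norm_num [add_smul, add_comm]
  | pred i ih => rw [zpow_sub_one, ih, Tr_inv, Tr_mul]; norm_num [sub_smul, sub_eq_add_neg, add_smul, neg_smul]

lemma eq_Tr {n : ℕ} {g : IsoRn n} {w : Eucl n} (h : IsTranslationBy g w) : g = Tr n w :=
  IsometryEquiv.ext fun x => h x

/-- The set of real `t` such that translation by `t • v` lies in `Γ`. -/
def Svg (n : ℕ) (Γ : Subgroup (IsoRn n)) (v : Eucl n) : AddSubgroup ℝ where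
  carrier := {t | Tr n (t • v) ∈ Γ}
  zero_mem' := by
    show Tr n ((0:ℝ) • v) ∈ Γ
    rw [zero_smul, Tr_zero]; exact Γ.one_mem
  add_mem' := by
    intro a b ha hb
    have : Tr n ((a + b) • v) = Tr n (a • v) * Tr n (b • v) := by
      rw [Tr_mul, add_smul]
    show Tr n ((a+b) • v) ∈ Γ
    rw [this]; exact Γ.mul_mem ha hb
  neg_mem' := by
    intro a ha
    have : Tr n ((-a) • v) = (Tr n (a • v))⁻¹ := by
      rw [Tr_inv, neg_smul]
    show Tr n ((-a) • v) ∈ Γ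
    rw [this]; exact Γ.inv_mem ha

lemma mem_zpowers_of_translation (n : ℕ) (Γ : Subgroup (IsoRn n)) (hΓ : IsCrystallographic Γ)
    (c : IsoRn n) (v : Eucl n) (hv : v ≠ 0) (hc : IsTranslationBy c v)
    (hC : IsMaxCyclic (Γ ⊓ Translations n) (Subgroup.zpowers c)) :
    ∀ g ∈ Γ, ∀ t : ℝ, IsTranslationBy g (t • v) → g ∈ Subgroup.zpowers c := by
  classical
  intro g hg t hgt
  have hgTr : g = Tr n (t • v) := eq_Tr hgt
  have htS : t ∈ Svg n Γ v := by
    show Tr n (t • v) ∈ Γ; rwa [← hgTr]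
  -- the subgroup S is cyclic
  rcases AddSubgroup.dense_or_cyclic (Svg n Γ v) with hdense | ⟨a, haS⟩
  · -- dense case: contradiction with discreteness
    exfalso
    obtain ⟨hfin, -⟩ := hΓ
    have hK : IsCompact (Metric.closedBall (0 : Eucl n) ‖v‖) := isCompact_closedBall _ _
    have hF := hfin _ _ hK hK
    set T : Set ℝ := {t | t ∈ Svg n Γ v ∧ |t| ≤ 1} with hT
    have hmapsto : ∀ t ∈ T, Tr n (t • v) ∈ Γ := fun t ht => ht.1
    -- T is infinite
    have hTinf : T.Infinite := by
      intro hTfin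
      have hU : IsOpen (Set.Ioo (0:ℝ) 1 \ T) := isOpen_Ioo.sdiff hTfin.isClosed
      have hUne : (Set.Ioo (0:ℝ) 1 \ T).Nonempty :=
        ((Set.Ioo_infinite (by norm_num)).diff hTfin).nonempty
      obtain ⟨s, hsS, hsU⟩ := hdense.exists_mem_open hU hUne
      exact hsU.2 ⟨hsS, by rw [abs_of_pos hsU.1.1]; exact le_of_lt hsU.1.2⟩
    -- injective map from T into the finite set
    set F := {γ : Γ | ((γ : IsoRn n) '' Metric.closedBall (0 : Eucl n) ‖v‖ ∩
        Metric.closedBall (0 : Eucl n) ‖v‖).Nonempty}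
    set f : ℝ → Γ := fun t => if h : t ∈ T then ⟨Tr n (t • v), h.1⟩ else 1
    have himg : f '' T ⊆ F := by
      rintro - ⟨t, ht, rfl⟩
      simp only [f, dif_pos ht]
      refine ⟨t • v, ⟨0, ?_, by simp⟩, ?_⟩
      · simp [norm_nonneg]
      · simp only [Metric.mem_closedBall, dist_zero_right, norm_smul]
        calc |t| * ‖v‖ ≤ 1 * ‖v‖ := by
              exact mul_le_mul_of_nonneg_right ht.2 (norm_nonneg v)
          _ = ‖v‖ := one_mul _
    have hinj : Set.InjOn f T := by
      intro t₁ h₁ t₂ h₂ he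
      simp only [f, dif_pos h₁, dif_pos h₂, Subtype.mk_eq_mk] at he
      have : t₁ • v = t₂ • v := by
        have := congrArg (fun (e : Γ) => (e : IsoRn n) 0) he
        simpa using this
      have h0 : (t₁ - t₂) • v = 0 := by rw [sub_smul, this, sub_self]
      rcases smul_eq_zero.mp h0 with h | h
      · linarith [sub_eq_zero.mp h]
      · exact absurd h hv
    exact hTinf (Set.Finite.of_finite_image (hF.subset himg) hinj)
  · -- cyclic case
    set d := Tr n (a • v) with hd
    have haΓ : Tr n (a • v) ∈ Γ := by
      have : a ∈ Svg n Γ v := by rw [haS]; exact AddSubgroup.mem_closure_singleton.mpr ⟨1, one_smul _ _⟩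
      exact this
    have hdA : d ∈ Γ ⊓ Translations n := ⟨haΓ, ⟨a • v, fun x => rfl⟩⟩
    have hDle : Subgroup.zpowers d ≤ Γ ⊓ Translations n := Subgroup.zpowers_le.mpr hdA
    have hcΓ : c ∈ Γ := (hC.1 (Subgroup.mem_zpowers c)).1
    have hcTr : c = Tr n ((1:ℝ) • v) := by rw [one_smul]; exact eq_Tr hc
    have h1S : (1:ℝ) ∈ Svg n Γ v := by show Tr n ((1:ℝ) • v) ∈ Γ; rwa [← hcTr]
    have hCD : Subgroup.zpowers c ≤ Subgroup.zpowers d := by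
      rw [Subgroup.zpowers_le]
      obtain ⟨k, hk⟩ := AddSubgroup.mem_closure_singleton.mp (haS ▸ h1S)
      refine ⟨k, ?_⟩
      show d ^ k = c
      rw [hd, Tr_zpow, hcTr, ← hk]
      congr 1
      exact (smul_assoc k a v).symm
    have hCeq : Subgroup.zpowers c = Subgroup.zpowers d := hC.2.2 _ hDle ⟨d, rfl⟩ hCD
    obtain ⟨k, hk⟩ := AddSubgroup.mem_closure_singleton.mp (haS ▸ htS)
    rw [hCeq]
    refine ⟨k, ?_⟩
    show d ^ k = g
    rw [hd, Tr_zpow, hgTr, ← hk]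
    congr 1
    exact (smul_assoc k a v).symm

lemma dichotomy {n : ℕ} (γ : IsoRn n) (v : Eucl n) (hv : v ≠ 0)
    (h : ∀ x : Eucl n, γ x ∈ lineThrough v x) :
    (∀ x, γ x = x + γ 0) ∨
      (∀ x, γ x = x - (2 * (inner ℝ x v : ℝ) / ‖v‖ ^ 2) • v + γ 0) := by
  classical
  have hnv : ‖v‖ ^ 2 ≠ 0 := pow_ne_zero 2 (norm_ne_zero_iff.mpr hv)
  choose t ht using h
  -- the key quadratic relation coming from the isometry condition
  have key : ∀ x y : Eucl n,
      (t x - t y) * (2 * (inner ℝ (x - y) v : ℝ) + (t x - t y) * ‖v‖ ^ 2) = 0 := by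
    intro x y
    have hdist : ‖γ x - γ y‖ = ‖x - y‖ := by
      rw [← dist_eq_norm, ← dist_eq_norm, γ.dist_eq]
    have hsub : γ x - γ y = (x - y) + (t x - t y) • v := by
      rw [ht x, ht y, sub_smul]; abel
    have hsq : ‖(x - y) + (t x - t y) • v‖ ^ 2 = ‖x - y‖ ^ 2 := by
      rw [← hsub, hdist]
    rw [norm_add_sq_real, real_inner_smul_right, norm_smul, mul_pow] at hsq
    have habs : |t x - t y| ^ 2 = (t x - t y) ^ 2 := sq_abs _
    rw [Real.norm_eq_abs, habs] at hsq
    nlinarith [hsq]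
  by_cases hall : ∀ x, t x = t 0
  · left
    intro x
    have h0 : γ 0 = t 0 • v := by rw [ht 0, zero_add]
    rw [ht x, hall x, h0]
  · right
    push_neg at hall
    obtain ⟨x₁, hx₁⟩ := hall
    have hs₁ : t x₁ - t 0 ≠ 0 := sub_ne_zero.mpr hx₁
    have h₁ : 2 * (inner ℝ x₁ v : ℝ) + (t x₁ - t 0) * ‖v‖ ^ 2 = 0 := by
      have := key x₁ 0
      rw [sub_zero] at this
      rcases mul_eq_zero.mp this with h | h
      · exact absurd h hs₁
      · exact h
    have hip₁ : (inner ℝ x₁ v : ℝ) ≠ 0 := by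
      intro h0
      rw [h0] at h₁
      have : (t x₁ - t 0) * ‖v‖ ^ 2 = 0 := by linarith
      rcases mul_eq_zero.mp this with h | h
      · exact hs₁ h
      · exact hnv h
    have hformula : ∀ x, t x = t 0 - 2 * (inner ℝ x v : ℝ) / ‖v‖ ^ 2 := by
      intro x
      rcases mul_eq_zero.mp (by have := key x 0; rwa [sub_zero] at this) with h | h
      · -- t x = t 0 ; must show inner x v = 0
        have htx : t x = t 0 := sub_eq_zero.mp h
        have hipx : (inner ℝ x v : ℝ) = 0 := by
          have hs' : t x₁ - t x ≠ 0 := by rw [htx]; exact hs₁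
          rcases mul_eq_zero.mp (key x₁ x) with h' | h' 
          · exact absurd h' hs'
          · rw [htx] at h'
            rw [inner_sub_left] at h'
            linarith
        rw [htx, hipx]
        ring
      · have htx : t x - t 0 = -(2 * (inner ℝ x v : ℝ)) / ‖v‖ ^ 2 := by
          rw [eq_div_iff hnv]; linarith
        rw [neg_div] at htx
        linarith
    intro x
    have h0 : γ 0 = t 0 • v := by rw [ht 0, zero_add]
    rw [ht x, hformula x, h0, sub_smul]
    abel

/-- Let `Γ` be crystallographic with translation subgroup `A`, and let `C ≤ A` be a maximal
cyclic subgroup generated by the translation `c` by a vector `v ≠ 0`.  The kernel of the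
induced action `j_C` of `N_Γ(C)/C` on the space of `C`-invariant lines has at most two
elements: the set of elements of `N_Γ(C)` preserving every `C`-invariant line is contained
in the union of two cosets of `C`. -/
theorem kernel_of_induced_action_le_two
    (n : ℕ) (Γ : Subgroup (IsoRn n)) (hΓ : IsCrystallographic Γ)
    (c : IsoRn n) (v : Eucl n) (hv : v ≠ 0) (hc : IsTranslationBy c v)
    (hC : IsMaxCyclic (Γ ⊓ Translations n) (Subgroup.zpowers c)) :
    ∃ a b : IsoRn n,
      ∀ γ ∈ Γ ⊓ Subgroup.normalizer (Subgroup.zpowers c : Set (IsoRn n)),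
        (∀ x : Eucl n, γ x ∈ lineThrough v x) →
          (∃ g ∈ Subgroup.zpowers c, γ = a * g) ∨ (∃ g ∈ Subgroup.zpowers c, γ = b * g) := by
  classical
  have hmem := mem_zpowers_of_translation n Γ hΓ c v hv hc hC
  have hnv : ‖v‖ ^ 2 ≠ 0 := pow_ne_zero 2 (norm_ne_zero_iff.mpr hv)
  have htrans : ∀ γ : IsoRn n, γ ∈ Γ → (∀ x : Eucl n, γ x ∈ lineThrough v x) →
      (∀ x, γ x = x + γ 0) → γ ∈ Subgroup.zpowers c := by
    intro γ hγ hline htr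
    obtain ⟨t0, ht0⟩ := hline 0
    rw [zero_add] at ht0
    exact hmem γ hγ t0 fun x => by rw [htr x, ht0]
  by_cases hex : ∃ g : IsoRn n, g ∈ Γ ∧ (∃ t : ℝ, g 0 = t • v) ∧
      ∀ x, g x = x - (2 * (inner ℝ x v : ℝ) / ‖v‖ ^ 2) • v + g 0
  · obtain ⟨γ₀, hγ₀Γ, ⟨t₀, ht₀⟩, hγ₀⟩ := hex
    refine ⟨1, γ₀, ?_⟩
    intro γ hγ hline
    rcases dichotomy γ v hv hline with htr | hrefl
    · exact Or.inl ⟨γ, htrans γ hγ.1 hline htr, (one_mul γ).symm⟩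
    · right
      obtain ⟨t₁, ht₁⟩ := hline 0
      rw [zero_add] at ht₁
      have hγ₀s : ∀ x : Eucl n, γ₀ (x + (t₀ - t₁) • v) = γ x := by
        intro x
        rw [hγ₀ (x + (t₀ - t₁) • v), hrefl x, ht₀, ht₁]
        have hip : (inner ℝ (x + (t₀ - t₁) • v) v : ℝ)
            = (inner ℝ x v : ℝ) + (t₀ - t₁) * ‖v‖ ^ 2 := by
          rw [inner_add_left, real_inner_smul_left, real_inner_self_eq_norm_sq]
        rw [hip]
        match_scalars
        · ring
        · field_simp
          ring
      have hδ : IsTranslationBy (γ₀⁻¹ * γ) ((t₀ - t₁) • v) := by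
        intro x
        apply γ₀.injective
        have h1 : γ₀ ((γ₀⁻¹ * γ) x) = γ x := by
          have h2 : γ₀ * (γ₀⁻¹ * γ) = γ := by group
          rw [← IsometryEquiv.mul_apply, h2]
        rw [h1]
        exact (hγ₀s x).symm
      have hδC : γ₀⁻¹ * γ ∈ Subgroup.zpowers c :=
        hmem _ (mul_mem (inv_mem hγ₀Γ) hγ.1) _ hδ
      exact ⟨γ₀⁻¹ * γ, hδC, (mul_inv_cancel_left γ₀ γ).symm⟩
  · refine ⟨1, 1, ?_⟩
    intro γ hγ hline
    left
    rcases dichotomy γ v hv hline with htr | hrefl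
    · exact ⟨γ, htrans γ hγ.1 hline htr, (one_mul γ).symm⟩
    · exfalso
      obtain ⟨t₁, ht₁⟩ := hline 0
      rw [zero_add] at ht₁
      exact hex ⟨γ, hγ.1, ⟨t₁, ht₁⟩, hrefl⟩
end
end

section
/- Let Γ be a crystallographic group of rank n with translation subgroup A, let C be a maximal cyclic subgroup of A, and let j_C : N_Γ(C)/C → Iso(ℝ^{n-1}(C)) be the induced action on the space of C-invariant lines. Then the image of j_C is a crystallographic group of rank n−1. -/
noncomputable section

section AuxCryst
set_option linter.unusedVariables false
open Submodule Metric Set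
section
variable {n : ℕ}
def Kv (v : Eucl n) : Submodule ℝ (Eucl n) := (ℝ ∙ v)ᗮ
def Pv (v : Eucl n) (x : Eucl n) : Eucl n := (orthogonalProjection (Kv v) x : Eucl n)
variable {v : Eucl n}
lemma Kv_orth (hv : v ≠ 0) : (Kv v)ᗮ = ℝ ∙ v := Submodule.orthogonal_orthogonal _

lemma finrank_Kv (hv : v ≠ 0) : Module.finrank ℝ (Kv v) = n - 1 := by
  have h1 : Module.finrank ℝ (ℝ ∙ v) = 1 := finrank_span_singleton hv
  have h2 : Module.finrank ℝ (ℝ ∙ v : Submodule ℝ (Eucl n)) + Module.finrank ℝ (Kv v) = n := by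
    rw [show Kv v = (ℝ ∙ v)ᗮ from rfl]
    rw [Submodule.finrank_add_finrank_orthogonal, finrank_euclideanSpace_fin]
  omega

def eKv (hv : v ≠ 0) : Kv v ≃ₗᵢ[ℝ] Eucl (n-1) :=
  ((stdOrthonormalBasis ℝ (Kv v)).reindex (finCongr (finrank_Kv hv))).repr

/-- the projection `φ`. -/
def phiv (hv : v ≠ 0) : Eucl n →ₗ[ℝ] Eucl (n - 1) :=
  (eKv hv).toLinearEquiv.toLinearMap ∘ₗ (orthogonalProjection (Kv v)).toLinearMap

/-- the section `σ`. -/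
def sigv (hv : v ≠ 0) : Eucl (n - 1) →ₗ[ℝ] Eucl n :=
  (Kv v).subtype ∘ₗ (eKv hv).symm.toLinearEquiv.toLinearMap

lemma phiv_sigv (hv : v ≠ 0) (z : Eucl (n-1)) : phiv hv (sigv hv z) = z := by
  simp [phiv, sigv, orthogonalProjection_mem_subspace_eq_self]

lemma phiv_surj (hv : v ≠ 0) : Function.Surjective (phiv hv) :=
  fun z => ⟨sigv hv z, phiv_sigv hv z⟩

lemma ker_phiv (hv : v ≠ 0) : LinearMap.ker (phiv hv) = ℝ ∙ v := by
  ext x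
  have h : phiv hv x = (eKv hv) (orthogonalProjection (Kv v) x) := rfl
  rw [LinearMap.mem_ker, h, ← Kv_orth hv,
    ← orthogonalProjection_eq_zero_iff (K := Kv v)]
  constructor
  · intro h0
    exact (eKv hv).injective (by rw [h0, map_zero])
  · intro h0; rw [h0, map_zero]

lemma norm_phiv (hv : v ≠ 0) (x : Eucl n) :
    ‖phiv hv x‖ = ‖(orthogonalProjection (Kv v) x : Eucl n)‖ := by
  have h : phiv hv x = (eKv hv) (orthogonalProjection (Kv v) x) := rfl
  rw [h, (eKv hv).norm_map]
  rfl

lemma Pv_mem (x : Eucl n) : Pv v x ∈ Kv v := (orthogonalProjection (Kv v) x).2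

lemma Pv_sub (x y : Eucl n) : Pv v (x - y) = Pv v x - Pv v y := by
  simp [Pv, map_sub]

lemma pyth (w : Eucl n) (hw : w ∈ Kv v) (t : ℝ) : ‖w‖ ≤ ‖w + t • v‖ := by
  have hin : inner ℝ w (t • v) = (0 : ℝ) := by
    have := hw (t • v) (Submodule.smul_mem _ t (Submodule.mem_span_singleton_self v))
    rwa [real_inner_comm] at this
  have h := norm_add_sq_real w (t • v)
  rw [hin] at h
  nlinarith [norm_nonneg (w + t • v), norm_nonneg w, sq_nonneg ‖t • v‖]

lemma decomp (hv : v ≠ 0) (x : Eucl n) : ∃ t : ℝ, x = Pv v x + t • v := by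
  have h : x - Pv v x ∈ (Kv v)ᗮ := Submodule.sub_starProjection_mem_orthogonal (K := Kv v) x
  rw [Kv_orth hv, Submodule.mem_span_singleton] at h
  obtain ⟨t, ht⟩ := h
  exact ⟨t, by rw [ht]; abel⟩

lemma Pv_smul_v (hv : v ≠ 0) (s : ℝ) : Pv v (s • v) = 0 := by
  have h : s • v ∈ (Kv v)ᗮ := by
    rw [Kv_orth hv]; exact Submodule.smul_mem _ s (Submodule.mem_span_singleton_self v)
  have h2 := orthogonalProjection_mem_subspace_orthogonalComplement_eq_zero h
  simp only [Pv, h2, ZeroMemClass.coe_zero]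

lemma infEdist_line (hv : v ≠ 0) (x b : Eucl n) :
    EMetric.infEdist x (lineThrough v b) = ‖Pv v (x - b)‖₊ := by
  obtain ⟨t, ht⟩ := decomp hv (x - b)
  apply le_antisymm
  · have hmem : b + t • v ∈ lineThrough v b := ⟨t, rfl⟩
    have he : edist x (b + t • v) = ‖Pv v (x - b)‖₊ := by
      rw [edist_nndist, nndist_eq_nnnorm]
      congr 2
      rw [show x - (b + t • v) = (x - b) - t • v by abel]
      nth_rewrite 1 [ht]
      abel
    exact he ▸ EMetric.infEdist_le_edist_of_mem hmem
  · show _ ≤ Metric.infEDist _ _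
    rw [Metric.le_infEDist]
    rintro q ⟨s, rfl⟩
    rw [edist_nndist, nndist_eq_nnnorm, ENNReal.coe_le_coe, ← NNReal.coe_le_coe]
    have hx : x - (b + s • v) = Pv v (x - b) + (t - s) • v := by
      rw [show x - (b + s • v) = (x - b) - s • v by abel]
      nth_rewrite 1 [ht]
      rw [sub_smul]; abel
    rw [hx]
    exact pyth _ (Pv_mem _) _

lemma hausdorff_line (hv : v ≠ 0) (a b : Eucl n) :
    EMetric.hausdorffEdist (lineThrough v a) (lineThrough v b) = ‖Pv v (a - b)‖₊ := by
  have key : ∀ x ∈ lineThrough v a, EMetric.infEdist x (lineThrough v b) = ‖Pv v (a - b)‖₊ := by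
    rintro x ⟨s, rfl⟩
    rw [infEdist_line hv]
    congr 2
    rw [show a + s • v - b = (a - b) + s • v by abel, show Pv v ((a-b) + s•v) = Pv v (a-b) + Pv v (s•v) by simp [Pv, map_add], Pv_smul_v hv, add_zero]
  apply le_antisymm
  · apply EMetric.hausdorffEdist_le_of_infEdist
    · intro x hx; exact (key x hx).le
    · rintro y ⟨s, rfl⟩
      show EMetric.infEdist _ _ ≤ _
      rw [infEdist_line hv]
      have : Pv v (b + s • v - a) = - Pv v (a - b) := by
        rw [show b + s • v - a = -(a - b) + s • v by abel,
          show Pv v (-(a-b) + s•v) = Pv v (-(a-b)) + Pv v (s•v) by simp [Pv, map_add],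
          Pv_smul_v hv, add_zero]
        simp [Pv, map_neg]
      rw [this, nnnorm_neg]
  · have ha : a ∈ lineThrough v a := ⟨0, by simp⟩
    rw [← key a ha]
    exact EMetric.infEdist_le_hausdorffEdist_of_mem ha
end

-- ===== Part 3 : isometry group lemmas =====
section
variable {n : ℕ}

/-- linear part of an isometry -/
def linp (h : IsoRn n) : Eucl n ≃ₗᵢ[ℝ] Eucl n := h.toRealLinearIsometryEquiv

lemma linp_apply (h : IsoRn n) (x : Eucl n) : linp h x = h x - h 0 :=
  IsometryEquiv.toRealLinearIsometryEquiv_apply h x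

lemma apply_add (h : IsoRn n) (x w : Eucl n) : h (x + w) = h x + linp h w := by
  have := map_add (linp h).toLinearEquiv.toLinearMap x w
  simp only [LinearEquiv.coe_coe, LinearIsometryEquiv.coe_toLinearEquiv] at this
  rw [linp_apply, linp_apply, linp_apply] at this
  have h2 : h (x + w) - h 0 = (h x - h 0) + (h w - h 0) := this
  rw [linp_apply]
  rw [sub_eq_iff_eq_add] at h2
  rw [h2]; abel

lemma norm_linp (h : IsoRn n) (w : Eucl n) : ‖linp h w‖ = ‖w‖ :=
  (linp h).norm_map w

variable {c : IsoRn n} {v : Eucl n}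

lemma czpow_apply (hc : IsTranslationBy c v) (m : ℤ) (x : Eucl n) :
    (c ^ m) x = x + (m : ℝ) • v := by
  have key : ∀ m : ℤ, ∀ x : Eucl n, (c ^ m) x = x + (m : ℝ) • v := by
    intro m
    induction m using Int.induction_on with
    | zero => intro x; simp
    | succ k ih =>
        intro x
        rw [zpow_add_one, IsometryEquiv.mul_apply, hc x, ih (x + v)]
        push_cast
        rw [add_smul, one_smul]; abel
    | pred k ih =>
        intro x
        rw [zpow_sub_one, IsometryEquiv.mul_apply]
        have hcx : c⁻¹ x = x - v := by
          apply c.injective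
          show c (c⁻¹ x) = c (x - v)
          rw [hc (x - v)]
          show c (c.symm x) = x - v + v
          rw [IsometryEquiv.apply_symm_apply]
          abel
        rw [hcx, ih (x - v)]
        push_cast
        rw [sub_smul, one_smul]; abel
  exact key m x

lemma conj_apply (h : IsoRn n) (hc : IsTranslationBy c v) (x : Eucl n) :
    (h * c * h⁻¹) x = x + linp h v := by
  rw [IsometryEquiv.mul_apply, IsometryEquiv.mul_apply, hc]
  rw [apply_add h _ v]
  congr 1
  exact h.apply_symm_apply x

lemma normalizer_linp (hc : IsTranslationBy c v) (hv : v ≠ 0) (h : IsoRn n)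
    (hmem : h ∈ Subgroup.normalizer ((Subgroup.zpowers c : Subgroup (IsoRn n)) : Set (IsoRn n))) :
    ∃ m : ℤ, linp h v = (m : ℝ) • v ∧ (m = 1 ∨ m = -1) := by
  have h1 : h * c * h⁻¹ ∈ Subgroup.zpowers c :=
    (Subgroup.mem_normalizer_iff.mp hmem c).mp (Subgroup.mem_zpowers c)
  obtain ⟨m, hm⟩ := Subgroup.mem_zpowers_iff.mp h1
  have h2 : (0 : Eucl n) + (m:ℝ) • v = (0 : Eucl n) + linp h v := by
    rw [← czpow_apply hc m 0, ← conj_apply h hc 0, hm]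
  have h3 : linp h v = (m:ℝ) • v := by
    rw [zero_add, zero_add] at h2; exact h2.symm
  refine ⟨m, h3, ?_⟩
  have h4 : ‖v‖ = |(m:ℝ)| * ‖v‖ := by
    have := norm_linp h v
    rw [h3, norm_smul, Real.norm_eq_abs] at this
    linarith
  have hvn : ‖v‖ ≠ 0 := norm_ne_zero_iff.mpr hv
  have h5 : |(m:ℝ)| = 1 := mul_right_cancel₀ hvn (by linarith : |(m:ℝ)| * ‖v‖ = 1 * ‖v‖)
  have : (m : ℝ) = 1 ∨ (m : ℝ) = -1 := (abs_eq (by norm_num : (0:ℝ) ≤ 1)).mp h5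
  rcases this with h' | h'
  · left; exact_mod_cast h'
  · right; exact_mod_cast h'

lemma comm_mem_normalizer (h : IsoRn n) (hcomm : h * c = c * h) :
    h ∈ Subgroup.normalizer ((Subgroup.zpowers c : Subgroup (IsoRn n)) : Set (IsoRn n)) := by
  have hC : Commute h c := hcomm
  rw [Subgroup.mem_normalizer_iff]
  intro g
  constructor
  · rintro ⟨m, rfl⟩
    refine ⟨m, ?_⟩
    have com := (hC.zpow_right m).eq
    rw [com]
    group
  · rintro ⟨m, hm⟩
    refine ⟨m, ?_⟩
    have hm' : c ^ m = h * g * h⁻¹ := hm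
    have hg : g = h⁻¹ * (c ^ m) * h := by
      rw [hm']; group
    have com := ((hC.zpow_right m).inv_left).eq
    rw [hg, com]
    group
end

-- ===== Part 4 : induced isometries =====
section
variable {n : ℕ} {c : IsoRn n} {v : Eucl n}

lemma phiv_v_zero (hv : v ≠ 0) : phiv hv v = 0 := by
  have : v ∈ LinearMap.ker (phiv hv) := by
    rw [ker_phiv hv]; exact Submodule.mem_span_singleton_self v
  exact this

lemma phiv_smul_v (hv : v ≠ 0) (t : ℝ) : phiv hv (t • v) = 0 := by
  rw [map_smul, phiv_v_zero hv, smul_zero]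

lemma edist_phiv (hv : v ≠ 0) (a b : Eucl n) :
    edist (phiv hv a) (phiv hv b) = ‖Pv v (a - b)‖₊ := by
  rw [edist_nndist, nndist_eq_nnnorm, ← map_sub]
  congr 1
  apply NNReal.coe_injective
  rw [coe_nnnorm, coe_nnnorm]
  exact norm_phiv hv (a - b)

lemma edist_phiv_hausdorff (hv : v ≠ 0) (a b : Eucl n) :
    edist (phiv hv a) (phiv hv b) =
      EMetric.hausdorffEdist (lineThrough v a) (lineThrough v b) := by
  rw [edist_phiv hv, hausdorff_line hv]

lemma inv_apply_apply (h : IsoRn n) (y : Eucl n) : h⁻¹ (h y) = y := h.symm_apply_apply y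

lemma sub_sig_phiv_mem (hv : v ≠ 0) (x : Eucl n) :
    ∃ t : ℝ, x = sigv hv (phiv hv x) + t • v := by
  have hk : x - sigv hv (phiv hv x) ∈ LinearMap.ker (phiv hv) := by
    rw [LinearMap.mem_ker, map_sub, phiv_sigv hv, sub_self]
  rw [ker_phiv hv, Submodule.mem_span_singleton] at hk
  obtain ⟨t, ht⟩ := hk
  exact ⟨t, by rw [ht]; abel⟩

/-- the function induced on `ℝ^{n-1}` by `h`. -/
def dfun (hv : v ≠ 0) (h : IsoRn n) : Eucl (n-1) → Eucl (n-1) :=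
  fun z => phiv hv (h (sigv hv z))

lemma dfun_phiv (hv : v ≠ 0) (h : IsoRn n) (hker : linp h v ∈ ℝ ∙ v) (x : Eucl n) :
    dfun hv h (phiv hv x) = phiv hv (h x) := by
  obtain ⟨t, ht⟩ := sub_sig_phiv_mem hv x
  obtain ⟨s, hs⟩ := Submodule.mem_span_singleton.mp hker
  nth_rewrite 2 [ht]
  rw [apply_add h _ (t • v), LinearIsometryEquiv.map_smul]
  rw [map_add, map_smul, ← hs, map_smul, phiv_v_zero hv, smul_zero, smul_zero, add_zero]
  rfl

lemma line_image (hv : v ≠ 0) (h : IsoRn n) {m : ℤ} (hm : linp h v = (m:ℝ) • v)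
    (hm1 : m = 1 ∨ m = -1) (x : Eucl n) :
    h '' lineThrough v x = lineThrough v (h x) := by
  have hmm : (m:ℝ) * (m:ℝ) = 1 := by rcases hm1 with rfl | rfl <;> norm_num
  ext p
  constructor
  · rintro ⟨q, ⟨t, rfl⟩, rfl⟩
    refine ⟨t * m, ?_⟩
    rw [apply_add h x (t • v), LinearIsometryEquiv.map_smul, hm, smul_smul]
  · rintro ⟨s, rfl⟩
    refine ⟨x + (s * m) • v, ⟨s * m, rfl⟩, ?_⟩
    rw [apply_add h x ((s * m) • v), LinearIsometryEquiv.map_smul, hm, smul_smul,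
      mul_assoc, hmm, mul_one]

lemma dfun_isometry (hv : v ≠ 0) (hc : IsTranslationBy c v) (h : IsoRn n)
    (hmem : h ∈ Subgroup.normalizer ((Subgroup.zpowers c : Subgroup (IsoRn n)) : Set (IsoRn n))) : Isometry (dfun hv h) := by
  obtain ⟨m, hm, hm1⟩ := normalizer_linp hc hv h hmem
  intro z₁ z₂
  show edist (phiv hv (h (sigv hv z₁))) (phiv hv (h (sigv hv z₂))) = edist z₁ z₂
  rw [edist_phiv_hausdorff hv, ← line_image hv h hm hm1, ← line_image hv h hm hm1,
    (show ∀ s t : Set (Eucl n), EMetric.hausdorffEdist (h '' s) (h '' t) = EMetric.hausdorffEdist s t from fun s t => Metric.hausdorffEDist_image h.isometry), ← edist_phiv_hausdorff hv,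
    phiv_sigv hv, phiv_sigv hv]

lemma linp_mem_span (hv : v ≠ 0) (hc : IsTranslationBy c v) (h : IsoRn n)
    (hmem : h ∈ Subgroup.normalizer ((Subgroup.zpowers c : Subgroup (IsoRn n)) : Set (IsoRn n))) : linp h v ∈ ℝ ∙ v := by
  obtain ⟨m, hm, _⟩ := normalizer_linp hc hv h hmem
  rw [hm]
  exact Submodule.smul_mem _ _ (Submodule.mem_span_singleton_self v)

lemma dfun_inv (hv : v ≠ 0) (hc : IsTranslationBy c v) (h : IsoRn n)
    (hmem : h ∈ Subgroup.normalizer ((Subgroup.zpowers c : Subgroup (IsoRn n)) : Set (IsoRn n))) (z : Eucl (n-1)) :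
    dfun hv h⁻¹ (dfun hv h z) = z := by
  have hmem' : h⁻¹ ∈ Subgroup.normalizer ((Subgroup.zpowers c : Subgroup (IsoRn n)) : Set (IsoRn n)) := inv_mem hmem
  show dfun hv h⁻¹ (phiv hv (h (sigv hv z))) = z
  rw [dfun_phiv hv h⁻¹ (linp_mem_span hv hc h⁻¹ hmem') (h (sigv hv z)),
    inv_apply_apply, phiv_sigv hv]

/-- the isometry of `ℝ^{n-1}` induced by `h` normalizing `C`. -/
def deltaIso (hv : v ≠ 0) (hc : IsTranslationBy c v) (h : IsoRn n)
    (hmem : h ∈ Subgroup.normalizer ((Subgroup.zpowers c : Subgroup (IsoRn n)) : Set (IsoRn n))) : IsoRn (n-1) where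
  toFun := dfun hv h
  invFun := dfun hv h⁻¹
  left_inv := dfun_inv hv hc h hmem
  right_inv := by
    intro z
    have := dfun_inv hv hc h⁻¹ (inv_mem hmem) z
    rwa [inv_inv] at this
  isometry_toFun := dfun_isometry hv hc h hmem

lemma deltaIso_phiv (hv : v ≠ 0) (hc : IsTranslationBy c v) (h : IsoRn n)
    (hmem : h ∈ Subgroup.normalizer ((Subgroup.zpowers c : Subgroup (IsoRn n)) : Set (IsoRn n))) (x : Eucl n) :
    deltaIso hv hc h hmem (phiv hv x) = phiv hv (h x) :=
  dfun_phiv hv h (linp_mem_span hv hc h hmem) x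
end

end AuxCryst


section MainAux
open Submodule Metric Set
variable {n : ℕ} {v : Eucl n}

/-- The image of the induced action. -/
def DeltaGroup (hv : v ≠ 0) (Γ : Subgroup (IsoRn n)) (c : IsoRn n) :
    Subgroup (IsoRn (n-1)) where
  carrier := {δ | ∃ γ ∈ Γ ⊓ Subgroup.normalizer ((Subgroup.zpowers c : Subgroup (IsoRn n)) : Set (IsoRn n)),
    ∀ x : Eucl n, δ (phiv hv x) = phiv hv (γ x)}
  one_mem' := ⟨1, one_mem _, fun x => rfl⟩
  mul_mem' := by
    rintro δ₁ δ₂ ⟨γ₁, h₁, k₁⟩ ⟨γ₂, h₂, k₂⟩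
    exact ⟨γ₁ * γ₂, mul_mem h₁ h₂, fun x => by
      rw [IsometryEquiv.mul_apply, k₂, k₁, IsometryEquiv.mul_apply]⟩
  inv_mem' := by
    rintro δ ⟨γ, hγ, k⟩
    refine ⟨γ⁻¹, inv_mem hγ, fun x => ?_⟩
    apply δ.injective
    show δ (δ⁻¹ (phiv hv x)) = δ (phiv hv (γ⁻¹ x))
    rw [IsometryEquiv.apply_inv_self, k, IsometryEquiv.apply_inv_self]

end MainAux

/-- Let `Γ` be crystallographic of rank `n` with translation subgroup `A`, and `C ≤ A`
maximal cyclic, generated by the translation `c` by `v ≠ 0`.  Identify the space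
`ℝ^{n-1}(C)` of `C`-invariant lines with `ℝ^{n-1}` via a surjective linear map
`φ : ℝⁿ → ℝ^{n-1}` with kernel `ℝv` which is an isometry for the Hausdorff metric on
lines.  Then the image of the induced action `j_C : N_Γ(C)/C → Iso(ℝ^{n-1})` — the group of
all isometries `δ` of `ℝ^{n-1}` satisfying `δ ∘ φ = φ ∘ γ` for some `γ ∈ N_Γ(C)` — is a
crystallographic group of rank `n - 1`. -/
theorem image_of_induced_action_is_crystallographic
    (n : ℕ) (hn : 1 ≤ n) (Γ : Subgroup (IsoRn n)) (hΓ : IsCrystallographic Γ)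
    (c : IsoRn n) (v : Eucl n) (hv : v ≠ 0) (hc : IsTranslationBy c v)
    (hC : IsMaxCyclic (Γ ⊓ Translations n) (Subgroup.zpowers c)) :
    ∃ φ : Eucl n →ₗ[ℝ] Eucl (n - 1),
      Function.Surjective φ ∧
      LinearMap.ker φ = Submodule.span ℝ {v} ∧
      (∀ x y : Eucl n,
        EMetric.hausdorffEdist (lineThrough v x) (lineThrough v y) = edist (φ x) (φ y)) ∧
      ∃ Δ : Subgroup (IsoRn (n - 1)),
        IsCrystallographic Δ ∧
        ∀ δ : IsoRn (n - 1),
          δ ∈ Δ ↔ ∃ γ ∈ Γ ⊓ Subgroup.normalizer ((Subgroup.zpowers c : Subgroup (IsoRn n)) : Set (IsoRn n)), ∀ x : Eucl n, δ (φ x) = φ (γ x) := by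
  classical
  have cmemA := hC.1 (Subgroup.mem_zpowers c)
  have cΓ : c ∈ Γ := cmemA.1
  have cN : c ∈ Subgroup.normalizer ((Subgroup.zpowers c : Subgroup (IsoRn n)) : Set (IsoRn n)) :=
    Subgroup.le_normalizer (Subgroup.mem_zpowers c)
  set Δ := DeltaGroup hv Γ c with hΔdef
  refine ⟨phiv hv, phiv_surj hv, ker_phiv hv,
    fun x y => (edist_phiv_hausdorff hv x y).symm, Δ, ⟨?_, ?_⟩, fun δ => Iff.rfl⟩
  · -- proper discontinuity
    intro K' L' hK' hL'
    have hσc : Continuous (sigv hv (v := v)) := (sigv hv).continuous_of_finiteDimensional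
    set K₀ : Set (Eucl n) := sigv hv '' K' with hK₀def
    have hK₀ : IsCompact K₀ := hK'.image hσc
    set L₀ : Set (Eucl n) :=
      (fun p : Eucl (n-1) × ℝ => sigv hv p.1 + p.2 • v) '' (L' ×ˢ Set.Icc (0:ℝ) 1) with hL₀def
    have hL₀ : IsCompact L₀ := (hL'.prod isCompact_Icc).image
      (((hσc.comp continuous_fst)).add (continuous_snd.smul continuous_const))
    have hT := hΓ.1 K₀ L₀ hK₀ hL₀
    haveI := hT.to_subtype
    have claim : ∀ δs : {γ : ↥Δ | ((γ : IsoRn (n-1)) '' K' ∩ L').Nonempty},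
        ∃ g : {γ : ↥Γ | ((γ : IsoRn n) '' K₀ ∩ L₀).Nonempty},
          ∀ z : Eucl (n-1), ((δs : ↥Δ) : IsoRn (n-1)) z
            = phiv hv (((g : ↥Γ) : IsoRn n) (sigv hv z)) := by
      rintro ⟨δ, hδ⟩
      obtain ⟨γ, hγ, hkey⟩ := δ.2
      rw [Subgroup.mem_inf] at hγ
      obtain ⟨w, ⟨z, hzK, hwz⟩, hwL⟩ := hδ
      set x := sigv hv z with hxdef
      have hφx : phiv hv x = z := phiv_sigv hv z
      have hwval : phiv hv (γ x) = w := by rw [← hkey x, hφx, hwz]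
      obtain ⟨t, ht⟩ := sub_sig_phiv_mem hv (γ x)
      set k : ℤ := ⌊t⌋ with hkdef
      set γ' : IsoRn n := c ^ (-k) * γ with hγ'def
      have hγ'Γ : γ' ∈ Γ := mul_mem (zpow_mem cΓ _) hγ.1
      have hγ'N : γ' ∈ Subgroup.normalizer ((Subgroup.zpowers c : Subgroup (IsoRn n)) : Set (IsoRn n)) :=
        mul_mem (zpow_mem cN _) hγ.2
      have hγ'apply : ∀ x' : Eucl n, γ' x' = γ x' + ((-k : ℤ) : ℝ) • v := by
        intro x'
        rw [hγ'def, IsometryEquiv.mul_apply, czpow_apply hc (-k) (γ x')]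
      have hγ'key : ∀ x' : Eucl n, δ.1 (phiv hv x') = phiv hv (γ' x') := by
        intro x'
        rw [hγ'apply x', map_add, map_smul, phiv_v_zero hv, smul_zero, add_zero, hkey x']
      have hb0 : (0:ℝ) ≤ t - (k : ℝ) := by
        rw [hkdef]; linarith [Int.floor_le t]
      have hb1 : t - (k : ℝ) ≤ 1 := by
        rw [hkdef]; linarith [Int.lt_floor_add_one t]
      have hγ'xL₀ : γ' x ∈ L₀ := by
        refine ⟨(phiv hv (γ x), t - (k : ℝ)), ⟨by rw [hwval]; exact hwL,
          Set.mem_Icc.mpr ⟨hb0, hb1⟩⟩, ?_⟩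
        show sigv hv (phiv hv (γ x)) + (t - (k:ℝ)) • v = γ' x
        rw [hγ'apply x, sub_smul]
        nth_rewrite 2 [ht]
        push_cast
        module
      refine ⟨⟨⟨γ', hγ'Γ⟩, ⟨γ' x, ⟨x, ⟨z, hzK, rfl⟩, rfl⟩, hγ'xL₀⟩⟩, fun z' => ?_⟩
      rw [show ((⟨γ', hγ'Γ⟩ : ↥Γ) : IsoRn n) = γ' from rfl,
        ← hγ'key (sigv hv z'), phiv_sigv hv]
    choose F hF using claim
    rw [← Set.finite_coe_iff]
    refine Finite.of_injective F fun a b hab => ?_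
    have : ∀ z, ((a : ↥Δ) : IsoRn (n-1)) z = ((b : ↥Δ) : IsoRn (n-1)) z := by
      intro z
      rw [hF a z, hF b z, hab]
    exact Subtype.ext (Subtype.ext (IsometryEquiv.ext this))
  · -- cocompactness
    obtain ⟨K, hKc, hKcov⟩ := hΓ.2
    have hφc : Continuous (phiv hv (v := v)) := (phiv hv).continuous_of_finiteDimensional
    have hT2 := hΓ.1 {0} (Metric.closedBall 0 ‖v‖) isCompact_singleton
      (isCompact_closedBall _ _)
    set conj : ↥Γ → ↥Γ := fun γ => γ⁻¹ * ⟨c, cΓ⟩ * γ with hconjdef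
    have hconjcoe : ∀ γ : ↥Γ, ((conj γ : ↥Γ) : IsoRn n)
        = (γ : IsoRn n)⁻¹ * c * ((γ : IsoRn n)⁻¹)⁻¹ := by
      intro γ
      rw [inv_inv]
      rfl
    have hGmem : ∀ γ : ↥Γ,
        conj γ ∈ {g : ↥Γ | ((g : IsoRn n) '' {0} ∩ Metric.closedBall 0 ‖v‖).Nonempty} := by
      intro γ
      refine ⟨((conj γ : ↥Γ) : IsoRn n) 0, ⟨0, rfl, rfl⟩, ?_⟩
      have hval : ((conj γ : ↥Γ) : IsoRn n) 0 = 0 + linp ((γ : IsoRn n)⁻¹) v := by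
        rw [hconjcoe]
        exact conj_apply ((γ : IsoRn n)⁻¹) hc 0
      rw [Metric.mem_closedBall, hval, zero_add, dist_zero_right, norm_linp]
    have hrange : Set.Finite (Set.range conj) := by
      apply Set.Finite.subset hT2
      rintro g ⟨γ, rfl⟩
      exact hGmem γ
    haveI := hrange.to_subtype
    have hK₁c : IsCompact (⋃ g : ↥(Set.range conj),
        ((g.2.choose : ↥Γ) : IsoRn n) '' K) :=
      isCompact_iUnion fun g => hKc.image ((g.2.choose : ↥Γ) : IsoRn n).continuous
    refine ⟨phiv hv '' _, hK₁c.image hφc, ?_⟩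
    rw [Set.eq_univ_iff_forall]
    intro z
    have hx : sigv hv z ∈ ⋃ γ : ↥Γ, (γ : IsoRn n) '' K := by
      rw [hKcov]; trivial
    obtain ⟨Us, ⟨γ, rfl⟩, hxU⟩ := hx
    obtain ⟨y, hyK, hyx⟩ := hxU
    have hgr : conj γ ∈ Set.range conj := ⟨γ, rfl⟩
    set g : ↥(Set.range conj) := ⟨conj γ, hgr⟩ with hgdef
    set γ₀ : ↥Γ := g.2.choose with hγ₀def
    have hG0 : conj γ₀ = conj γ := g.2.choose_spec
    have hconj : ((γ₀ : IsoRn n))⁻¹ * c * ↑γ₀ = ((γ : IsoRn n))⁻¹ * c * ↑γ := by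
      have h1 := congrArg (fun t : ↥Γ => (t : IsoRn n)) hG0
      have h2 := hconjcoe γ₀
      have h3 := hconjcoe γ
      rw [inv_inv] at h2 h3
      rw [← h2, ← h3]
      exact h1
    set h : IsoRn n := ↑γ * (↑γ₀ : IsoRn n)⁻¹ with hhdef
    have hcomm : h * c = c * h := by
      have h1 : c * ↑γ₀ = ↑γ₀ * ((↑γ : IsoRn n)⁻¹ * c * ↑γ) := by
        rw [← hconj]; group
      rw [hhdef]
      calc ↑γ * (↑γ₀:IsoRn n)⁻¹ * c
          = ↑γ * ((↑γ₀:IsoRn n)⁻¹ * (c * ↑γ₀) * (↑γ₀:IsoRn n)⁻¹) := by group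
        _ = ↑γ * ((↑γ:IsoRn n)⁻¹ * c * ↑γ) * (↑γ₀:IsoRn n)⁻¹ := by rw [h1]; group
        _ = c * (↑γ * (↑γ₀:IsoRn n)⁻¹) := by group
    have hhN : h ∈ Subgroup.normalizer ((Subgroup.zpowers c : Subgroup (IsoRn n)) : Set (IsoRn n)) := comm_mem_normalizer h hcomm
    have hhΓ : h ∈ Γ := mul_mem γ.2 (inv_mem γ₀.2)
    have hδmem : deltaIso hv hc h hhN ∈ Δ :=
      ⟨h, Subgroup.mem_inf.mpr ⟨hhΓ, hhN⟩, fun x => deltaIso_phiv hv hc h hhN x⟩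
    rw [Set.mem_iUnion]
    refine ⟨⟨deltaIso hv hc h hhN, hδmem⟩, ?_⟩
    have hy₁ : (↑γ₀ : IsoRn n) y ∈ ⋃ g : ↥(Set.range conj),
        ((g.2.choose : ↥Γ) : IsoRn n) '' K :=
      Set.mem_iUnion.mpr ⟨g, ⟨y, hyK, rfl⟩⟩
    refine ⟨phiv hv ((↑γ₀ : IsoRn n) y), ⟨(↑γ₀ : IsoRn n) y, hy₁, rfl⟩, ?_⟩
    rw [show ((⟨deltaIso hv hc h hhN, hδmem⟩ : ↥Δ) : IsoRn (n-1)) = deltaIso hv hc h hhN from rfl]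
    rw [deltaIso_phiv hv hc h hhN]
    have hfin : h ((↑γ₀ : IsoRn n) y) = sigv hv z := by
      have hstep : h ((↑γ₀ : IsoRn n) y)
          = (↑γ : IsoRn n) ((↑γ₀ : IsoRn n)⁻¹ ((↑γ₀ : IsoRn n) y)) := rfl
      rw [hstep, IsometryEquiv.inv_apply_self, hyx]
    rw [hfin, phiv_sigv hv]
end
end

section
/- Let Γ be a crystallographic group with translation subgroup A, let C be a maximal cyclic subgroup of A, and let H ≤ N_Γ(C). Then the fixed set of H acting on ℝ^{n-1}(C) (the space of C-invariant lines) is contractible if HC/C is finite, and empty if HC/C is infinite. -/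
noncomputable section

namespace FixedSetAux

variable {n : ℕ}

/-- The linear part of an isometry of `ℝⁿ` (Mazur–Ulam). -/
def lin (g : IsoRn n) : Eucl n ≃ₗᵢ[ℝ] Eucl n := g.toRealLinearIsometryEquiv

lemma apply_eq (g : IsoRn n) (x : Eucl n) : g x = lin g x + g 0 := by
  simp [lin, sub_add_cancel]

lemma map_add_lin (g : IsoRn n) (x w : Eucl n) : g (x + w) = g x + lin g w := by
  rw [apply_eq g (x + w), apply_eq g x, map_add]
  abel

lemma zpow_apply {c : IsoRn n} {v : Eucl n} (hc : IsTranslationBy c v) (k : ℤ) (x : Eucl n) :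
    (c ^ k) x = x + (k : ℝ) • v := by
  have hinv : ∀ y, c⁻¹ y = y - v := by
    intro y
    apply c.injective
    have h1 : c (c⁻¹ y) = y := by
      have := IsometryEquiv.mul_apply c c⁻¹ y
      rw [mul_inv_cancel] at this
      simpa using this.symm
    rw [h1, hc (y - v), sub_add_cancel]
  induction k using Int.induction_on generalizing x with
  | zero => simp
  | succ k ih =>
      rw [zpow_add_one, IsometryEquiv.mul_apply, hc x, ih (x + v)]
      push_cast
      rw [add_smul, one_smul]
      abel
  | pred k ih =>
      rw [zpow_sub_one, IsometryEquiv.mul_apply, hinv x, ih (x - v)]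
      push_cast
      rw [sub_smul, one_smul]
      abel

lemma norm_lin {c : IsoRn n} {v : Eucl n} (hc : IsTranslationBy c v) {g : IsoRn n}
    (hg : g ∈ Subgroup.normalizer ((Subgroup.zpowers c : Subgroup (IsoRn n)) : Set (IsoRn n))) : ∃ m : ℤ, lin g v = (m : ℝ) • v := by
  have h1 : g * c * g⁻¹ ∈ Subgroup.zpowers c :=
    (Subgroup.mem_normalizer_iff.mp hg c).mp (Subgroup.mem_zpowers c)
  obtain ⟨m, hm⟩ := Subgroup.mem_zpowers_iff.mp h1
  refine ⟨m, ?_⟩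
  have h2 := congrArg (fun f : IsoRn n => f (g 0)) hm
  simp only [IsometryEquiv.mul_apply] at h2
  rw [zpow_apply hc] at h2
  have h3 : g⁻¹ (g 0) = 0 := by
    have := IsometryEquiv.mul_apply g⁻¹ g (0 : Eucl n)
    rw [inv_mul_cancel] at this
    simpa using this.symm
  rw [h3, hc 0, zero_add] at h2
  have h4 : g v = g 0 + lin g v := by
    have := map_add_lin g 0 v
    rwa [zero_add] at this
  rw [h4] at h2
  exact (add_left_cancel h2).symm

lemma norm_lin_pm {c : IsoRn n} {v : Eucl n} (hc : IsTranslationBy c v) (hv : v ≠ 0)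
    {g : IsoRn n} (hg : g ∈ Subgroup.normalizer ((Subgroup.zpowers c : Subgroup (IsoRn n)) : Set (IsoRn n))) :
    ∃ ε : ℤ, (ε = 1 ∨ ε = -1) ∧ lin g v = (ε : ℝ) • v := by
  obtain ⟨m, hm⟩ := norm_lin hc hg
  refine ⟨m, ?_, hm⟩
  have h1 : ‖(m : ℝ) • v‖ = ‖v‖ := by rw [← hm]; exact (lin g).norm_map v
  rw [norm_smul, Real.norm_eq_abs] at h1
  have h2 : |(m : ℝ)| = 1 := by
    have hvn : ‖v‖ ≠ 0 := norm_ne_zero_iff.mpr hv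
    field_simp at h1
    tauto
  have h3 : |m| = 1 := by
    have : ((|m| : ℤ) : ℝ) = 1 := by rw [Int.cast_abs]; exact_mod_cast h2
    exact_mod_cast this
  exact (abs_eq (by norm_num)).mp h3

lemma finite_near {Γ : Subgroup (IsoRn n)} (hΓ : IsCrystallographic Γ) (x0 : Eucl n) (r : ℝ) :
    {g : IsoRn n | g ∈ Γ ∧ dist (g x0) x0 ≤ r}.Finite := by
  have h := hΓ.1 {x0} (Metric.closedBall x0 r) isCompact_singleton (isCompact_closedBall x0 r)
  refine (h.image (fun γ : Γ => (γ : IsoRn n))).subset ?_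
  rintro g ⟨hgΓ, hgd⟩
  exact ⟨⟨g, hgΓ⟩, ⟨g x0, ⟨x0, rfl, rfl⟩, Metric.mem_closedBall.mpr hgd⟩, rfl⟩

end FixedSetAux

set_option maxHeartbeats 2000000 in
/-- Let `Γ` be crystallographic with translation subgroup `A`, `C = ⟨c⟩ ≤ A` maximal cyclic
(`c` the translation by `v ≠ 0`), and `H ≤ N_Γ(C)`.  Identify the space of `C`-invariant
lines with `ℝ^{n-1}` via a surjective linear map `φ` with kernel `ℝv`.  The fixed set of
`H` acting on the space of lines — the set of `y = φ(x)` with `φ(g x) = φ(x)` for all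
`g ∈ H` — is contractible if `HC/C ≅ H/(H ∩ C)` is finite, and empty if it is infinite. -/
theorem fixed_set_on_line_space
    (n : ℕ) (hn : 1 ≤ n) (Γ : Subgroup (IsoRn n)) (hΓ : IsCrystallographic Γ)
    (c : IsoRn n) (v : Eucl n) (hv : v ≠ 0) (hc : IsTranslationBy c v)
    (hC : IsMaxCyclic (Γ ⊓ Translations n) (Subgroup.zpowers c))
    (H : Subgroup (IsoRn n)) (hH : H ≤ Γ ⊓ Subgroup.normalizer ((Subgroup.zpowers c : Subgroup (IsoRn n)) : Set (IsoRn n)))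
    (φ : Eucl n →ₗ[ℝ] Eucl (n - 1)) (hφ : Function.Surjective φ)
    (hker : LinearMap.ker φ = Submodule.span ℝ {v}) :
    (((Subgroup.zpowers c ⊓ H).subgroupOf H).FiniteIndex →
        ContractibleSpace {y : Eucl (n - 1) // ∀ g ∈ H, ∀ x : Eucl n, φ x = y → φ (g x) = y}) ∧
      (¬ ((Subgroup.zpowers c ⊓ H).subgroupOf H).FiniteIndex →
        {y : Eucl (n - 1) | ∀ g ∈ H, ∀ x : Eucl n, φ x = y → φ (g x) = y} = ∅) := by
  classical
  open FixedSetAux in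
  set K : Subgroup ↥H := (Subgroup.zpowers c ⊓ H).subgroupOf H with hKdef
  have hmemΓ : ∀ g ∈ H, g ∈ Γ := fun g hg => (Subgroup.mem_inf.mp (hH hg)).1
  have hmemN : ∀ g ∈ H, g ∈ Subgroup.normalizer ((Subgroup.zpowers c : Subgroup (IsoRn n)) : Set (IsoRn n)) :=
    fun g hg => (Subgroup.mem_inf.mp (hH hg)).2
  have hφv : φ v = 0 := by
    have : v ∈ LinearMap.ker φ := by rw [hker]; exact Submodule.mem_span_singleton_self v
    simpa using this
  have heps : ∀ g ∈ H, ∃ ε : ℤ, (ε = 1 ∨ ε = -1) ∧ FixedSetAux.lin g v = (ε : ℝ) • v :=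
    fun g hg => FixedSetAux.norm_lin_pm hc hv (hmemN g hg)
  have hkerv : ∀ w : Eucl n, φ w = 0 → ∃ t : ℝ, w = t • v := by
    intro w hw
    have hmem : w ∈ LinearMap.ker φ := by simpa using hw
    rw [hker] at hmem
    obtain ⟨t, ht⟩ := Submodule.mem_span_singleton.mp hmem
    exact ⟨t, ht.symm⟩
  have hkey : ∀ g ∈ H, ∀ x x' : Eucl n, φ x = φ x' → φ (g x) = φ (g x') := by
    intro g hg x x' hxx
    obtain ⟨ε, _, hε⟩ := heps g hg
    obtain ⟨t, ht⟩ : ∃ t : ℝ, x - x' = t • v := hkerv _ (by rw [map_sub, hxx, sub_self])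
    have hx : x = x' + t • v := by rw [← ht]; abel
    rw [hx, FixedSetAux.map_add_lin, map_add, map_smul, hε]
    simp [hφv]
  constructor
  · -- finite index → contractible
    intro hfin
    haveI := hfin
    haveI : Finite (H ⧸ K) := Subgroup.finite_quotient_of_finiteIndex (H := K)
    haveI : Fintype (H ⧸ K) := Fintype.ofFinite _
    have hwd : ∀ a b : ↥H, (QuotientGroup.leftRel K).r a b →
        φ ((a : IsoRn n) 0) = φ ((b : IsoRn n) 0) := by
      intro a b hab
      rw [QuotientGroup.leftRel_apply, hKdef, Subgroup.mem_subgroupOf] at hab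
      obtain ⟨k, hk⟩ := Subgroup.mem_zpowers_iff.mp (Subgroup.mem_inf.mp hab).1
      have hb : (b : IsoRn n) = (a : IsoRn n) * c ^ k := by
        have : ((a : IsoRn n))⁻¹ * (b : IsoRn n) = c ^ k := by
          rw [hk]; norm_cast
        rw [← this, mul_inv_cancel_left]
      rw [hb, IsometryEquiv.mul_apply]
      refine (hkey a a.2 _ _ ?_).symm
      rw [FixedSetAux.zpow_apply hc, zero_add, map_smul, hφv, map_zero, smul_zero]
    set fbar : H ⧸ K → Eucl (n - 1) :=
      Quotient.lift (fun h : ↥H => φ ((h : IsoRn n) 0)) hwd with hfbardef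
    have hfbar : ∀ h : ↥H, fbar (QuotientGroup.mk h) = φ ((h : IsoRn n) 0) := fun h => rfl
    set N : ℕ := Fintype.card (H ⧸ K) with hNdef
    have hN0 : 0 < N := Fintype.card_pos
    have hNR : ((N : ℝ)) ≠ 0 := Nat.cast_ne_zero.mpr hN0.ne'
    have hNz : ∀ z : Eucl (n - 1), (N : ℝ)⁻¹ • (N • z) = z := by
      intro z
      rw [← Nat.cast_smul_eq_nsmul ℝ, smul_smul, inv_mul_cancel₀ hNR, one_smul]
    set ybar : Eucl (n - 1) := (N : ℝ)⁻¹ • ∑ q : H ⧸ K, fbar q with hybardef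
    set x' : Eucl n := (N : ℝ)⁻¹ • ∑ q : H ⧸ K, ((Quotient.out q : ↥H) : IsoRn n) 0 with hx'def
    have hfq : ∀ q : H ⧸ K, φ (((Quotient.out q : ↥H) : IsoRn n) 0) = fbar q := by
      intro q
      conv_rhs => rw [← QuotientGroup.out_eq' q]
      rfl
    have hφx' : φ x' = ybar := by
      rw [hx'def, map_smul, map_sum, hybardef]
      congr 1
      exact Finset.sum_congr rfl fun q _ => hfq q
    have hybar : ∀ g ∈ H, ∀ x : Eucl n, φ x = ybar → φ (g x) = ybar := by
      intro g hg x hx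
      have h1 : φ (g x) = φ (g x') := hkey g hg x x' (by rw [hx, hφx'])
      have hterm : ∀ q : H ⧸ K, fbar ((⟨g, hg⟩ : ↥H) • q) =
          φ (FixedSetAux.lin g (((Quotient.out q : ↥H) : IsoRn n) 0)) + φ (g 0) := by
        intro q
        rw [← MulAction.Quotient.mk_smul_out K (⟨g, hg⟩ : ↥H) q, hfbar]
        have h2 : (((⟨g, hg⟩ : ↥H) • Quotient.out q : ↥H) : IsoRn n) 0
            = g (((Quotient.out q : ↥H) : IsoRn n) 0) := rfl
        rw [h2, FixedSetAux.apply_eq g, map_add]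
      have hsum : ∑ q : H ⧸ K, fbar ((⟨g, hg⟩ : ↥H) • q) = ∑ q : H ⧸ K, fbar q :=
        Equiv.sum_comp (MulAction.toPerm (⟨g, hg⟩ : ↥H)) fbar
      have hsum2 : ∑ q : H ⧸ K, φ (FixedSetAux.lin g (((Quotient.out q : ↥H) : IsoRn n) 0))
          = ∑ q : H ⧸ K, fbar q - N • φ (g 0) := by
        rw [← hsum]
        rw [Finset.sum_congr rfl fun q _ => hterm q, Finset.sum_add_distrib,
          Finset.sum_const, Finset.card_univ]
        simp [hNdef]
      have h3 : φ (g x') = ybar := by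
        rw [FixedSetAux.apply_eq g x', map_add, hx'def, map_smul, map_sum, map_smul, map_sum,
          Finset.sum_congr rfl fun q _ => rfl, hsum2]
        rw [smul_sub, hNz, hybardef]
        abel
      rw [h1, h3]
    have hconv : Convex ℝ {y : Eucl (n - 1) | ∀ g ∈ H, ∀ x : Eucl n, φ x = y → φ (g x) = y} := by
      intro y1 hy1 y2 hy2 tt ss htt hss htts
      intro g hg x hx
      obtain ⟨x1, hx1⟩ := hφ y1
      by_cases hss0 : ss = 0
      · have htt1 : tt = 1 := by rw [hss0, add_zero] at htts; exact htts
        rw [hss0, htt1, one_smul, zero_smul, add_zero] at hx ⊢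
        exact hy1 g hg x hx
      · set x2 : Eucl n := ss⁻¹ • (x - tt • x1) with hx2def
        have hx2 : φ x2 = y2 := by
          rw [hx2def, map_smul, map_sub, map_smul, hx, hx1, add_sub_cancel_left,
            smul_smul, inv_mul_cancel₀ hss0, one_smul]
        have hxeq : x = tt • x1 + ss • x2 := by
          rw [hx2def, smul_smul, mul_inv_cancel₀ hss0, one_smul]
          abel
        have haff : g x = tt • g x1 + ss • g x2 := by
          rw [hxeq, FixedSetAux.apply_eq g, FixedSetAux.apply_eq g x1, FixedSetAux.apply_eq g x2,
            map_add, map_smul, map_smul, smul_add, smul_add]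
          have hgz : tt • (g 0 : Eucl n) + ss • g 0 = g 0 := by
            rw [← add_smul, htts, one_smul]
          conv_lhs => rw [← hgz]
          abel
        rw [haff, map_add, map_smul, map_smul, hy1 g hg x1 hx1, hy2 g hg x2 hx2]
    exact hconv.contractibleSpace ⟨ybar, hybar⟩
  · -- infinite index → empty
    intro hinf
    by_contra hne
    obtain ⟨y, hy⟩ := Set.nonempty_iff_ne_empty.mpr hne
    obtain ⟨x0, hx0⟩ := hφ y
    have htrans : ∀ g ∈ H, ∃ t : ℝ, g x0 = x0 + t • v := by
      intro g hg
      have h1 : φ (g x0) = y := hy g hg x0 hx0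
      obtain ⟨t, ht⟩ := hkerv (g x0 - x0) (by rw [map_sub, h1, hx0, sub_self])
      exact ⟨t, by rw [← ht]; abel⟩
    have hHfin : ∀ r : ℝ, {g : IsoRn n | g ∈ H ∧ dist (g x0) x0 ≤ r}.Finite := by
      intro r
      refine (FixedSetAux.finite_near hΓ x0 r).subset ?_
      rintro g ⟨h1, h2⟩
      exact ⟨hmemΓ g h1, h2⟩
    have hdist : ∀ t : ℝ, dist (x0 + t • v) x0 = |t| * ‖v‖ := by
      intro t
      rw [dist_eq_norm, add_sub_cancel_left, norm_smul, Real.norm_eq_abs]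
    have hcΓ : c ∈ Γ := (Subgroup.mem_inf.mp (hC.1 (Subgroup.mem_zpowers c))).1
    -- Step 1: if some `h ∈ H` has linear part fixing `v` and moves `x0`, then a nonzero power
    -- of `c` lies in `H` (pigeonhole via proper discontinuity).
    have hstep1 : ∀ h ∈ H, FixedSetAux.lin h v = v → h x0 ≠ x0 →
        ∃ d : ℤ, 0 < d ∧ c ^ d ∈ H := by
      intro h hh hlv hmove
      obtain ⟨t, ht⟩ := htrans h hh
      have ht0 : t ≠ 0 := by
        intro h0
        apply hmove
        rw [ht, h0, zero_smul, add_zero]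
      have hlins : ∀ (x : Eucl n) (s : ℝ), h (x + s • v) = h x + s • v := by
        intro x s
        rw [FixedSetAux.map_add_lin, map_smul, hlv]
      have hlinpow : ∀ j : ℕ, ∀ x : Eucl n, ∀ s : ℝ,
          (h ^ j) (x + s • v) = (h ^ j) x + s • v := by
        intro j
        induction j with
        | zero => intro x s; simp
        | succ j ih =>
            intro x s
            rw [pow_succ, IsometryEquiv.mul_apply, IsometryEquiv.mul_apply, hlins, ih]
      have hpow : ∀ j : ℕ, (h ^ j) x0 = x0 + ((j : ℝ) * t) • v := by
        intro j
        induction j with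
        | zero => simp
        | succ j ih =>
            rw [pow_succ, IsometryEquiv.mul_apply, ht, hlinpow j _ t, ih]
            push_cast
            module
      set u : ℕ → IsoRn n := fun j => c ^ (-⌊(j : ℝ) * t⌋) * h ^ j with hudef
      have huΓ : ∀ j, u j ∈ Γ := fun j =>
        Γ.mul_mem (Γ.zpow_mem hcΓ _) (Γ.pow_mem (hmemΓ h hh) j)
      have hud : ∀ j, dist (u j x0) x0 ≤ ‖v‖ := by
        intro j
        have happ : u j x0 = x0 + Int.fract ((j : ℝ) * t) • v := by
          show (c ^ (-⌊(j : ℝ) * t⌋) * h ^ j) x0 = _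
          rw [IsometryEquiv.mul_apply, hpow j, FixedSetAux.zpow_apply hc, Int.fract]
          push_cast
          module
        rw [happ, hdist]
        calc |Int.fract ((j : ℝ) * t)| * ‖v‖
            ≤ 1 * ‖v‖ := by
              refine mul_le_mul_of_nonneg_right ?_ (norm_nonneg v)
              rw [abs_of_nonneg (Int.fract_nonneg _)]
              exact (Int.fract_lt_one _).le
          _ = ‖v‖ := one_mul _
      have hnotinj : ¬ Function.Injective u := by
        intro hinj
        have hfin' : (Set.range u).Finite := by
          refine (FixedSetAux.finite_near hΓ x0 ‖v‖).subset ?_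
          rintro _ ⟨j, rfl⟩
          exact ⟨huΓ j, hud j⟩
        exact (Set.infinite_range_of_injective hinj) hfin'
      obtain ⟨j, j', hjj', hjne⟩ := Function.not_injective_iff.mp hnotinj
      have hkey2 : ∀ a b : ℕ, b < a → u a = u b → ∃ d : ℤ, 0 < d ∧ c ^ d ∈ H := by
        intro a b hlt hu
        set p : ℤ := ⌊(a : ℝ) * t⌋ with hpdef
        set p' : ℤ := ⌊(b : ℝ) * t⌋ with hp'def
        have hu2 : c ^ (-p) * h ^ a = c ^ (-p') * h ^ b := hu
        have e1 : h ^ a = c ^ (p - p') * h ^ b := by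
          have h2 : c ^ p * (c ^ (-p) * h ^ a) = c ^ p * (c ^ (-p') * h ^ b) := by rw [hu2]
          rw [← mul_assoc, ← mul_assoc, ← zpow_add, ← zpow_add, add_neg_cancel, zpow_zero,
            one_mul, ← sub_eq_add_neg] at h2
          exact h2
        have e2 : h ^ (a - b) = c ^ (p - p') := by
          have e3 : h ^ (a - b) * h ^ b = h ^ a := pow_sub_mul_pow h hlt.le
          rw [e1] at e3
          exact mul_right_cancel e3
        have hd0 : (p - p' : ℤ) ≠ 0 := by
          intro h0
          rw [h0, zpow_zero] at e2
          have e4 : (h ^ (a - b)) x0 = x0 := by rw [e2]; rfl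
          rw [hpow (a - b)] at e4
          have e5 : (((a - b : ℕ) : ℝ) * t) • v = 0 := left_eq_add.mp e4.symm
          rcases smul_eq_zero.mp e5 with h' | h'
          · rcases mul_eq_zero.mp h' with h'' | h''
            · have hab : (a - b : ℕ) ≠ 0 := Nat.sub_ne_zero_of_lt hlt
              exact (Nat.cast_ne_zero.mpr hab) h''
            · exact ht0 h''
          · exact hv h'
        have hdH : c ^ (p - p') ∈ H := by
          rw [← e2]
          exact H.pow_mem hh (a - b)
        rcases lt_or_gt_of_ne hd0 with hneg | hpos
        · refine ⟨-(p - p'), by omega, ?_⟩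
          rw [zpow_neg]
          exact H.inv_mem hdH
        · exact ⟨p - p', hpos, hdH⟩
      rcases lt_or_gt_of_ne hjne with h1 | h1
      · exact hkey2 j' j h1 hjj'.symm
      · exact hkey2 j j' h1 hjj'
    by_cases hCH : ∃ d : ℤ, 0 < d ∧ c ^ d ∈ H
    · -- a positive power of `c` lies in `H`: bounded coset representatives
      obtain ⟨d, hd0, hdH⟩ := hCH
      have hdR : (0 : ℝ) < (d : ℝ) := by exact_mod_cast hd0
      have hB : ∀ q : ↥H ⧸ K, ∃ h : ↥H, dist ((h : IsoRn n) x0) x0 ≤ (d : ℝ) * ‖v‖ ∧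
          QuotientGroup.mk h = q := by
        intro q
        set h1 : ↥H := Quotient.out q with hh1def
        obtain ⟨t, ht⟩ := htrans (h1 : IsoRn n) h1.2
        obtain ⟨ε, hε1, hε⟩ := heps (h1 : IsoRn n) h1.2
        set j : ℤ := -ε * ⌊t / (d : ℝ)⌋ with hjdef
        have hcH : c ^ (d * j) ∈ H := by
          rw [zpow_mul]
          exact Subgroup.zpow_mem H hdH j
        have hkK : (⟨c ^ (d * j), hcH⟩ : ↥H) ∈ K := by
          rw [hKdef, Subgroup.mem_subgroupOf]
          exact Subgroup.mem_inf.mpr ⟨⟨d * j, rfl⟩, hcH⟩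
        refine ⟨h1 * ⟨c ^ (d * j), hcH⟩, ?_, ?_⟩
        · have he2 : (ε : ℝ) * (ε : ℝ) = 1 := by
            rcases hε1 with h' | h' <;> rw [h'] <;> norm_num
          have hco : ((d * j : ℤ) : ℝ) * (ε : ℝ) = -((d : ℝ) * (⌊t / (d : ℝ)⌋ : ℝ)) := by
            rw [hjdef]
            push_cast
            calc (d : ℝ) * (-(ε : ℝ) * (⌊t / (d : ℝ)⌋ : ℝ)) * (ε : ℝ)
                = -((d : ℝ) * (⌊t / (d : ℝ)⌋ : ℝ)) * ((ε : ℝ) * (ε : ℝ)) := by ring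
              _ = -((d : ℝ) * (⌊t / (d : ℝ)⌋ : ℝ)) := by rw [he2, mul_one]
          have happ : ((h1 * ⟨c ^ (d * j), hcH⟩ : ↥H) : IsoRn n) x0
              = x0 + (t - (d : ℝ) * (⌊t / (d : ℝ)⌋ : ℝ)) • v := by
            have e0 : ((h1 * ⟨c ^ (d * j), hcH⟩ : ↥H) : IsoRn n) x0
                = (h1 : IsoRn n) ((c ^ (d * j)) x0) := by
              rw [Subgroup.coe_mul, IsometryEquiv.mul_apply]
            rw [e0, FixedSetAux.zpow_apply hc, FixedSetAux.map_add_lin, map_smul, hε, ht,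
              smul_smul, hco, sub_smul, neg_smul]
            abel
          have hfr : t - (d : ℝ) * (⌊t / (d : ℝ)⌋ : ℝ) = (d : ℝ) * Int.fract (t / (d : ℝ)) := by
            rw [Int.fract]
            field_simp
          rw [happ, hdist, hfr]
          refine mul_le_mul_of_nonneg_right ?_ (norm_nonneg v)
          rw [abs_of_nonneg (mul_nonneg hdR.le (Int.fract_nonneg _))]
          calc (d : ℝ) * Int.fract (t / (d : ℝ)) ≤ (d : ℝ) * 1 :=
                mul_le_mul_of_nonneg_left (Int.fract_lt_one _).le hdR.le
            _ = (d : ℝ) := mul_one _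
        · rw [QuotientGroup.mk_mul_of_mem h1 hkK]
          exact QuotientGroup.out_eq' q
      have huniv : (Set.univ : Set (↥H ⧸ K)).Finite := by
        have hset : {h : ↥H | dist ((h : IsoRn n) x0) x0 ≤ (d : ℝ) * ‖v‖}.Finite := by
          refine ((hHfin ((d : ℝ) * ‖v‖)).preimage
            (Set.injOn_of_injective Subtype.val_injective)).subset ?_
          intro h hd1
          exact ⟨h.2, hd1⟩
        refine (hset.image QuotientGroup.mk).subset ?_
        rintro q -
        obtain ⟨h, hd1, hq⟩ := hB q
        exact ⟨h, hd1, hq⟩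
      haveI : Finite (↥H ⧸ K) := Set.finite_univ_iff.mp huniv
      exact hinf (Subgroup.finiteIndex_of_finite_quotient (H := K))
    · -- no positive power of `c` lies in `H`: `H` is finite
      have hz : ∀ h ∈ H, FixedSetAux.lin h v = v → h x0 = x0 := by
        intro h hh hlv
        by_contra hmove
        exact hCH (hstep1 h hh hlv hmove)
      have hbound : ∃ r : ℝ, ∀ h ∈ H, dist (h x0) x0 ≤ r := by
        by_cases hm : ∃ h1, h1 ∈ H ∧ FixedSetAux.lin h1 v = -v
        · obtain ⟨h1, hh1, hl1⟩ := hm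
          obtain ⟨t1, ht1⟩ := htrans h1 hh1
          refine ⟨|t1| * ‖v‖, ?_⟩
          intro h hh
          obtain ⟨ε, hε1, hε⟩ := heps h hh
          obtain ⟨t, ht⟩ := htrans h hh
          rcases hε1 with h1e | h1e
          · have hlv : FixedSetAux.lin h v = v := by rw [hε, h1e]; norm_num
            rw [hz h hh hlv, dist_self]
            positivity
          · have hlh : FixedSetAux.lin h v = -v := by rw [hε, h1e]; norm_num
            have hcomp : FixedSetAux.lin (h1 * h) v = v := by
              have e1 : (h1 * h) (x0 + v) = (h1 * h) x0 + FixedSetAux.lin (h1 * h) v :=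
                FixedSetAux.map_add_lin _ x0 v
              have e2 : (h1 * h) (x0 + v) = (h1 * h) x0 + v := by
                rw [IsometryEquiv.mul_apply]
                rw [show h (x0 + v) = h x0 + FixedSetAux.lin h v from
                  FixedSetAux.map_add_lin h x0 v, hlh]
                rw [show h x0 + -v = h x0 + (-1 : ℝ) • v by rw [neg_one_smul]]
                rw [show (h1 : IsoRn n) (h x0 + (-1 : ℝ) • v)
                    = h1 (h x0) + (-1 : ℝ) • FixedSetAux.lin h1 v by
                  rw [FixedSetAux.map_add_lin, map_smul]]
                rw [hl1, IsometryEquiv.mul_apply]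
                rw [neg_one_smul, neg_neg]
              rw [e2] at e1
              exact (add_left_cancel e1.symm)
            have hfix := hz (h1 * h) (H.mul_mem hh1 hh) hcomp
            have e3 : (h1 * h) x0 = x0 + (t1 - t) • v := by
              rw [IsometryEquiv.mul_apply, ht, FixedSetAux.map_add_lin, map_smul, hl1, ht1,
                smul_neg, sub_smul]
              abel
            rw [hfix] at e3
            have hzero : (t1 - t) • v = 0 := (left_eq_add.mp e3)
            have htt1 : t = t1 := by
              rcases smul_eq_zero.mp hzero with h' | h'
              · have : t1 = t := by linarith [sub_eq_zero.mp (by linarith [h'] : t1 - t = 0)]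
                exact this.symm
              · exact absurd h' hv
            rw [ht, hdist, htt1]
        · push_neg at hm
          refine ⟨0, ?_⟩
          intro h hh
          obtain ⟨ε, hε1, hε⟩ := heps h hh
          have hlv : FixedSetAux.lin h v = v := by
            rcases hε1 with h1e | h1e
            · rw [hε, h1e]; norm_num
            · exact absurd (by rw [hε, h1e]; norm_num) (hm h hh)
          rw [hz h hh hlv, dist_self]
      obtain ⟨r, hr⟩ := hbound
      have hHfin2 : (H : Set (IsoRn n)).Finite := by
        refine (hHfin r).subset ?_
        intro g hg
        exact ⟨hg, hr g hg⟩
      haveI : Finite ↥H := hHfin2.to_subtype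
      haveI : Finite (↥H ⧸ K) := Quotient.finite _
      exact hinf (Subgroup.finiteIndex_of_finite_quotient (H := K))
end
end
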